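/- In the standard triangle A=(−1,1), B=(1,1), C=(0,−1), for Q=(t, t²+τ) with |t| ≤ 1/2 and |τ| ≤ δ ≤ 1/8, the line y = 2tx − t² + τ through Q meets segment AC at a point P and segment BC at a point R (not on extensions), and Q lies on segment PR. -/

import Mathlib

theorem stmt_18 (t τ δ : ℝ) (ht : |t| ≤ 1/2) (hτ : |τ| ≤ δ)
    (hδ0 : 0 < δ) (hδ : δ ≤ 1/8) :
    let A : ℝ × ℝ := (-1, 1)
    let B : ℝ × ℝ := (1, 1)
    let C : ℝ × ℝ := (0, -1)
    let Q : ℝ × ℝ := (t, t ^ 2 + τ)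
    ∃ P R : ℝ × ℝ, P ∈ segment ℝ A C ∧ R ∈ segment ℝ B C ∧
      P.2 = 2 * t * P.1 - t ^ 2 + τ ∧ R.2 = 2 * t * R.1 - t ^ 2 + τ ∧
      Q ∈ segment ℝ P R := by
  intro A B C Q
  obtain ⟨ht1, ht2⟩ := abs_le.mp ht
  obtain ⟨hτ1, hτ2⟩ := abs_le.mp hτ
  have hτl : -(1/8) ≤ τ := by linarith
  have hτu : τ ≤ 1/8 := by linarith
  set xP := (t^2 - τ - 1)/(2*t+2) with hxP
  set xR := (t^2 - τ - 1)/(2*t-2) with hxR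
  have hd1 : (0:ℝ) < 2*t+2 := by linarith
  have hd2 : 2*t-2 < (0:ℝ) := by linarith
  have hnum : t^2 - τ - 1 < 0 := by nlinarith
  have hxP0 : xP < 0 := div_neg_of_neg_of_pos hnum hd1
  have hxP1 : -1 ≤ xP := by rw [hxP, le_div_iff₀ hd1]; nlinarith
  have hxR0 : (0:ℝ) ≤ xR := le_of_lt (div_pos_of_neg_of_neg hnum hd2)
  have hxR1 : xR ≤ 1 := by rw [hxR, div_le_iff_of_neg hd2]; nlinarith
  have hPt : xP ≤ t := by rw [hxP, div_le_iff₀ hd1]; nlinarith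
  have htR : t ≤ xR := by rw [hxR, le_div_iff_of_neg hd2]; nlinarith
  have hPeq : xP * (2*t+2) = t^2 - τ - 1 := by
    rw [hxP, div_mul_eq_mul_div, mul_div_assoc, div_self (ne_of_gt hd1), mul_one]
  have hReq : xR * (2*t-2) = t^2 - τ - 1 := by
    rw [hxR, div_mul_eq_mul_div, mul_div_assoc, div_self (ne_of_lt hd2), mul_one]
  have hden : 0 < xR - xP := by linarith
  set u := (t - xP)/(xR - xP) with hu
  have hu0 : 0 ≤ u := div_nonneg (by linarith) (by linarith)
  have hu1 : u ≤ 1 := by rw [hu, div_le_one hden]; linarith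
  have hueq : u * (xR - xP) = t - xP := by
    rw [hu]; field_simp [ne_of_gt hden]
  clear_value xP xR u
  refine ⟨(xP, 2*t*xP - t^2 + τ), (xR, 2*t*xR - t^2 + τ), ?_, ?_, rfl, rfl, ?_⟩
  · refine ⟨-xP, 1 + xP, by linarith, by linarith, by ring, ?_⟩
    apply Prod.ext
    · simp [A, C]
    · simp only [A, C, Prod.smul_mk, Prod.mk_add_mk, smul_eq_mul]
      linear_combination -hPeq
  · refine ⟨xR, 1 - xR, by linarith, by linarith, by ring, ?_⟩
    apply Prod.ext
    · simp [B, C]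
    · simp only [B, C, Prod.smul_mk, Prod.mk_add_mk, smul_eq_mul]
      linear_combination -hReq
  · refine ⟨1 - u, u, by linarith, hu0, by ring, ?_⟩
    have h1 : (1-u)*xP + u*xR = t := by linear_combination hueq
    apply Prod.ext
    · simpa [Q] using h1
    · simp only [Q, Prod.smul_mk, Prod.mk_add_mk, smul_eq_mul]
      linear_combination (2*t) * h1
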